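/- Point identification for continuous strictly increasing distributions: under the assumptions of the preceding bounds, if additionally F_{Y₀|D=0} and F_{Y₁|D=0} are continuous and strictly increasing on ℝ (so Q⁺_{Y₀|D=0} = Q⁻_{Y₀|D=0} and F_{Y₀|D=0} ∘ Q⁻_{Y₀|D=0} = id on (0,1)), then F_{Y₁₀|D=1}(y) = F_{Y₀|D=1}(Q⁻_{Y₀|D=0}(F_{Y₁|D=0}(y))) for all y ∈ ℝ, and moreover F_{Y₀|D=1} is continuous at the evaluation point so the lower and upper bounds coincide. -/

import Mathlib

open Set MeasureTheory

/-- Conditional cdf `F_{Y|D=d}(y) = P(Y ≤ y, D = d) / P(D = d)`. -/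
noncomputable def condCdf' {Ω : Type*} [MeasurableSpace Ω] (μ : Measure Ω)
    (Y D : Ω → ℝ) (d y : ℝ) : ℝ :=
  (μ {ω | Y ω ≤ y ∧ D ω = d}).toReal / (μ {ω | D ω = d}).toReal

/-- Lower generalized quantile function, valued in the extended reals. -/
noncomputable def Qminus (F : ℝ → ℝ) (u : ℝ) : EReal :=
  sInf ((fun x : ℝ => (x : EReal)) '' {x | u ≤ F x})

open Filter Topology

/-- If `C` is strictly monotone on `[0,1]`, `G` is monotone with values in `[0,1]`,
and `C ∘ G` is continuous, then `G` is continuous. -/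
lemma continuous_of_comp_strictMonoOn {C G : ℝ → ℝ} (hC : StrictMonoOn C (Icc (0:ℝ) 1))
    (hG : Monotone G) (hG01 : ∀ x, G x ∈ Icc (0:ℝ) 1)
    (hcomp : Continuous (fun x => C (G x))) : Continuous G := by
  rw [continuous_iff_continuousAt]
  intro r
  rw [Metric.continuousAt_iff]
  intro ε hε
  -- right side
  have hR : ∃ δ > 0, G (r + δ) < G r + ε := by
    by_contra h
    push_neg at h
    have h1 : G r + ε ≤ 1 := le_trans (h 1 one_pos) (hG01 (r + 1)).2
    set u : ℝ := G r + ε / 2 with hu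
    have hu01 : u ∈ Icc (0:ℝ) 1 :=
      ⟨by have := (hG01 r).1; simp only [hu]; linarith, by simp only [hu]; linarith⟩
    have hlt : G r < u := by simp only [hu]; linarith
    have key : ∀ n : ℕ, C u ≤ C (G (r + 1 / (n + 1))) := by
      intro n
      have hpos : (0:ℝ) < 1 / (n + 1) := by positivity
      have : u < G (r + 1 / (n + 1)) := lt_of_lt_of_le (by simp only [hu]; linarith) (h _ hpos)
      exact (hC hu01 (hG01 _) this).le
    have htend : Tendsto (fun n : ℕ => C (G (r + 1 / (n + 1)))) atTop (𝓝 (C (G r))) := by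
      apply (hcomp.continuousAt.tendsto).comp
      have : Tendsto (fun n : ℕ => r + 1 / ((n:ℝ) + 1)) atTop (𝓝 (r + 0)) :=
        tendsto_const_nhds.add tendsto_one_div_add_atTop_nhds_zero_nat
      simpa using this
    have := le_of_tendsto_of_tendsto' tendsto_const_nhds htend key
    exact absurd this (not_le.mpr (hC (hG01 r) hu01 hlt))
  -- left side
  have hL : ∃ δ > 0, G r - ε < G (r - δ) := by
    by_contra h
    push_neg at h
    have h1 : 0 ≤ G r - ε := le_trans (hG01 (r - 1)).1 (h 1 one_pos)
    set u : ℝ := G r - ε / 2 with hu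
    have hu01 : u ∈ Icc (0:ℝ) 1 :=
      ⟨by simp only [hu]; linarith, by have := (hG01 r).2; simp only [hu]; linarith⟩
    have hlt : u < G r := by simp only [hu]; linarith
    have key : ∀ n : ℕ, C (G (r - 1 / (n + 1))) ≤ C u := by
      intro n
      have hpos : (0:ℝ) < 1 / (n + 1) := by positivity
      have : G (r - 1 / (n + 1)) < u := lt_of_le_of_lt (h _ hpos) (by simp only [hu]; linarith)
      exact (hC (hG01 _) hu01 this).le
    have htend : Tendsto (fun n : ℕ => C (G (r - 1 / (n + 1)))) atTop (𝓝 (C (G r))) := by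
      apply (hcomp.continuousAt.tendsto).comp
      have : Tendsto (fun n : ℕ => r - 1 / ((n:ℝ) + 1)) atTop (𝓝 (r - 0)) :=
        tendsto_const_nhds.sub tendsto_one_div_add_atTop_nhds_zero_nat
      simpa using this
    have := le_of_tendsto_of_tendsto' htend tendsto_const_nhds key
    exact absurd this (not_le.mpr (hC hu01 (hG01 r) hlt))
  obtain ⟨δ₁, hδ₁, hR⟩ := hR
  obtain ⟨δ₂, hδ₂, hL⟩ := hL
  refine ⟨min δ₁ δ₂, lt_min hδ₁ hδ₂, fun {z} hz => ?_⟩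
  rw [Real.dist_eq] at hz ⊢
  rw [abs_lt] at hz ⊢
  have hz1 : z ≤ r + δ₁ := by linarith [hz.2, min_le_left δ₁ δ₂]
  have hz2 : r - δ₂ ≤ z := by linarith [hz.1, min_le_right δ₁ δ₂]
  constructor
  · have := hG hz2; linarith
  · have := hG hz1; linarith

theorem cic_point_identification
    {Ω : Type*} [MeasurableSpace Ω] (μ : Measure Ω) [IsProbabilityMeasure μ]
    (Y0 Y1 Y10 D : Ω → ℝ)
    (hY0 : Measurable Y0) (hY1 : Measurable Y1) (hY10 : Measurable Y10)
    (hD : Measurable D) (hD01 : ∀ ω, D ω = 0 ∨ D ω = 1)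
    (hq : (μ {ω | D ω = 0}).toReal ∈ Ioo (0:ℝ) 1)
    (C : ℝ → ℝ) (hC : StrictMonoOn C (Icc (0:ℝ) 1))
    (hC0 : ∀ y : ℝ,
      C ((μ {ω | Y0 ω ≤ y}).toReal) = (μ {ω | Y0 ω ≤ y ∧ D ω = 0}).toReal)
    (hC10 : ∀ y : ℝ,
      C ((μ {ω | Y10 ω ≤ y}).toReal) = (μ {ω | Y10 ω ≤ y ∧ D ω = 0}).toReal)
    (hb : ∀ y : ℝ, μ {ω | Y10 ω ≤ y ∧ D ω = 0} = μ {ω | Y1 ω ≤ y ∧ D ω = 0})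
    (hc : ∀ u ∈ Icc (0:ℝ) 1, ∀ v ∈ Icc (0:ℝ) 1, u ≤ v → u - C u ≤ v - C v)
    (hcont0 : Continuous (fun y => condCdf' μ Y0 D 0 y))
    (hmono0 : StrictMono (fun y => condCdf' μ Y0 D 0 y))
    (hcont1 : Continuous (fun y => condCdf' μ Y1 D 0 y))
    (hmono1 : StrictMono (fun y => condCdf' μ Y1 D 0 y))
    (y : ℝ) :
    ∃ r : ℝ,
      Qminus (condCdf' μ Y0 D 0) (condCdf' μ Y1 D 0 y) = (r : EReal) ∧
      ContinuousAt (fun z => condCdf' μ Y0 D 1 z) r ∧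
      condCdf' μ Y10 D 1 y = condCdf' μ Y0 D 1 r := by
  have hD0m : MeasurableSet {ω | D ω = 0} := hD (measurableSet_singleton 0)
  set q0 : ℝ := (μ {ω | D ω = 0}).toReal with hq0def
  have hq0 : 0 < q0 := hq.1
  have hle1 : ∀ s : Set Ω, (μ s).toReal ≤ 1 := fun s => by
    simpa using ENNReal.toReal_mono ENNReal.one_ne_top (prob_le_one (μ := μ) (s := s))
  -- splitting of the measure of a sublevel set into the `D = 0` and `D = 1` parts
  have hsum : ∀ (Y : Ω → ℝ) (z : ℝ), (μ {ω | Y ω ≤ z}).toReal =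
      (μ {ω | Y ω ≤ z ∧ D ω = 0}).toReal + (μ {ω | Y ω ≤ z ∧ D ω = 1}).toReal := by
    intro Y z
    have h1 : {ω | Y ω ≤ z ∧ D ω = 0} = {ω | Y ω ≤ z} ∩ {ω | D ω = 0} := rfl
    have h2 : {ω | Y ω ≤ z ∧ D ω = 1} = {ω | Y ω ≤ z} \ {ω | D ω = 0} := by
      ext ω
      simp only [mem_setOf_eq, mem_diff]
      constructor
      · rintro ⟨h, h1'⟩; exact ⟨h, by rw [h1']; norm_num⟩
      · rintro ⟨h, h1'⟩; exact ⟨h, (hD01 ω).resolve_left h1'⟩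
    rw [h1, h2, ← ENNReal.toReal_add (measure_ne_top _ _) (measure_ne_top _ _),
      measure_inter_add_diff _ hD0m]
  -- `0 < F_{Y1|D=0}(y) < 1`
  have hcond_le_one : ∀ (Y : Ω → ℝ) (z : ℝ), condCdf' μ Y D 0 z ≤ 1 := by
    intro Y z
    rw [condCdf']
    rw [div_le_one hq0]
    exact ENNReal.toReal_mono (measure_ne_top _ _) (measure_mono (fun ω h => h.2))
  have hcond_nonneg : ∀ (Y : Ω → ℝ) (z : ℝ), 0 ≤ condCdf' μ Y D 0 z := by
    intro Y z
    exact div_nonneg ENNReal.toReal_nonneg ENNReal.toReal_nonneg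
  have hF1y0 : 0 < condCdf' μ Y1 D 0 y :=
    lt_of_le_of_lt (hcond_nonneg Y1 (y - 1)) (hmono1 (by linarith : y - 1 < y))
  have hF1y1 : condCdf' μ Y1 D 0 y < 1 :=
    lt_of_lt_of_le (hmono1 (by linarith : y < y + 1)) (hcond_le_one Y1 (y + 1))
  -- `F_{Y0|D=0}(n) → 1` as `n → ∞`
  have htop : Tendsto (fun n : ℕ => condCdf' μ Y0 D 0 (n : ℝ)) atTop (𝓝 1) := by
    set s : ℕ → Set Ω := fun n => {ω | Y0 ω ≤ (n : ℝ) ∧ D ω = 0} with hs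
    have hsm : Monotone s := by
      intro a b hab ω hω
      exact ⟨le_trans hω.1 (by exact_mod_cast Nat.cast_le.mpr hab), hω.2⟩
    have hU : (⋃ n, s n) = {ω | D ω = 0} := by
      ext ω
      simp only [mem_iUnion, hs, mem_setOf_eq]
      constructor
      · rintro ⟨n, _, h⟩; exact h
      · intro h
        obtain ⟨n, hn⟩ := exists_nat_ge (Y0 ω)
        exact ⟨n, hn, h⟩
    have h1 := tendsto_measure_iUnion_atTop (μ := μ) hsm
    rw [hU] at h1
    have h2 : Tendsto (fun n : ℕ => (μ (s n)).toReal) atTop (𝓝 q0) :=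
      (ENNReal.tendsto_toReal (measure_ne_top _ _)).comp h1
    have h3 := h2.div_const q0
    rw [div_self (ne_of_gt hq0)] at h3
    exact h3
  -- `F_{Y0|D=0}(-n) → 0` as `n → ∞`
  have hbot : Tendsto (fun n : ℕ => condCdf' μ Y0 D 0 (-(n : ℝ))) atTop (𝓝 0) := by
    set t : ℕ → Set Ω := fun n => {ω | Y0 ω ≤ -(n : ℝ) ∧ D ω = 0} with ht
    have htm : Antitone t := by
      intro a b hab ω hω
      refine ⟨le_trans hω.1 ?_, hω.2⟩
      have : (a : ℝ) ≤ b := by exact_mod_cast hab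
      linarith
    have htms : ∀ n, NullMeasurableSet (t n) μ :=
      fun n => ((hY0 measurableSet_Iic).inter hD0m).nullMeasurableSet
    have hI : (⋂ n, t n) = (∅ : Set Ω) := by
      ext ω
      simp only [mem_iInter, ht, mem_setOf_eq, mem_empty_iff_false, iff_false, not_forall]
      obtain ⟨n, hn⟩ := exists_nat_gt (-(Y0 ω))
      exact ⟨n, fun h => absurd h.1 (by push_neg; linarith)⟩
    have h1 := tendsto_measure_iInter_atTop (μ := μ) htms htm ⟨0, measure_ne_top _ _⟩
    rw [hI, measure_empty] at h1
    have h2 : Tendsto (fun n : ℕ => (μ (t n)).toReal) atTop (𝓝 0) := by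
      have := (ENNReal.tendsto_toReal (by simp : (0 : ENNReal) ≠ ⊤)).comp h1
      simpa [Function.comp_def] using this
    have h3 := h2.div_const q0
    rw [zero_div] at h3
    exact h3
  -- find `r` with `F_{Y0|D=0}(r) = F_{Y1|D=0}(y)` by the intermediate value theorem
  obtain ⟨N, hN⟩ : ∃ N : ℕ, condCdf' μ Y1 D 0 y < condCdf' μ Y0 D 0 (N : ℝ) :=
    (htop.eventually (eventually_gt_nhds hF1y1)).exists
  obtain ⟨M, hM⟩ : ∃ M : ℕ, condCdf' μ Y0 D 0 (-(M : ℝ)) < condCdf' μ Y1 D 0 y :=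
    (hbot.eventually (eventually_lt_nhds hF1y0)).exists
  have hMN : (-(M : ℝ)) ≤ (N : ℝ) := (hmono0.lt_iff_lt.mp (hM.trans hN)).le
  obtain ⟨r, -, hr⟩ :=
    intermediate_value_Icc hMN hcont0.continuousOn ⟨hM.le, hN.le⟩
  have hr' : condCdf' μ Y0 D 0 r = condCdf' μ Y1 D 0 y := hr
  refine ⟨r, ?_, ?_, ?_⟩
  · -- the quantile is exactly `r`
    have hset : {x | condCdf' μ Y1 D 0 y ≤ condCdf' μ Y0 D 0 x} = Ici r := by
      ext x
      simp only [mem_setOf_eq, mem_Ici, ← hr']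
      exact hmono0.le_iff_le
    rw [Qminus, hset]
    apply le_antisymm
    · exact sInf_le ⟨r, self_mem_Ici, rfl⟩
    · apply le_sInf
      rintro x ⟨a, ha, rfl⟩
      exact EReal.coe_le_coe_iff.mpr ha
  · -- continuity of `F_{Y0|D=1}` at `r`
    set G : ℝ → ℝ := fun z => (μ {ω | Y0 ω ≤ z}).toReal with hG
    have hGmono : Monotone G := fun a b hab =>
      ENNReal.toReal_mono (measure_ne_top _ _) (measure_mono (fun ω h => le_trans h hab))
    have hG01 : ∀ x, G x ∈ Icc (0:ℝ) 1 := by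
      intro x
      exact ⟨ENNReal.toReal_nonneg, hle1 _⟩
    have hcomp : Continuous (fun z => C (G z)) := by
      have heq : (fun z => C (G z)) = fun z => q0 * condCdf' μ Y0 D 0 z := by
        funext z
        rw [hG, hC0 z, condCdf', mul_div_cancel₀ _ (ne_of_gt hq0)]
      rw [heq]
      exact continuous_const.mul hcont0
    have hGcont : Continuous G := continuous_of_comp_strictMonoOn hC hGmono hG01 hcomp
    have hrepr : (fun z => condCdf' μ Y0 D 1 z) =
        fun z => (G z - C (G z)) / (μ {ω | D ω = 1}).toReal := by
      funext z
      rw [condCdf']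
      congr 1
      have := hsum Y0 z
      rw [hC0 z]
      rw [hG]
      simp only []
      linarith [hsum Y0 z]
    rw [hrepr]
    exact ((hGcont.sub hcomp).div_const _).continuousAt
  · -- the changes-in-changes identity
    have hHG : (μ {ω | Y10 ω ≤ y}).toReal = (μ {ω | Y0 ω ≤ r}).toReal := by
      apply hC.injOn
      · exact ⟨ENNReal.toReal_nonneg, hle1 _⟩
      · exact ⟨ENNReal.toReal_nonneg, hle1 _⟩
      · rw [hC10 y, hC0 r, hb y]
        have e1 : (μ {ω | Y1 ω ≤ y ∧ D ω = 0}).toReal = q0 * condCdf' μ Y1 D 0 y := by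
          rw [condCdf', mul_div_cancel₀ _ (ne_of_gt hq0)]
        have e2 : (μ {ω | Y0 ω ≤ r ∧ D ω = 0}).toReal = q0 * condCdf' μ Y0 D 0 r := by
          rw [condCdf', mul_div_cancel₀ _ (ne_of_gt hq0)]
        rw [e1, e2, hr']
    have h10 : (μ {ω | Y10 ω ≤ y ∧ D ω = 0}).toReal = (μ {ω | Y0 ω ≤ r ∧ D ω = 0}).toReal := by
      rw [← hC10 y, ← hC0 r, hHG]
    have h1 : (μ {ω | Y10 ω ≤ y ∧ D ω = 1}).toReal = (μ {ω | Y0 ω ≤ r ∧ D ω = 1}).toReal := by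
      have s1 := hsum Y10 y
      have s2 := hsum Y0 r
      linarith [hHG, h10]
    rw [condCdf', condCdf', h1]
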